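/- If G is a simple graph on n vertices such that d(u)+d(v) ≥ n+1 for every pair of nonadjacent vertices u, v, then G is Hamilton-connected, i.e., every two distinct vertices of G are joined by a Hamiltonian path. -/

import Mathlib

set_option linter.unusedSectionVars false
open List

namespace EGHelp
variable {α : Type*} {V : Type*} [DecidableEq V]


/-- successor pair membership gives decomposition -/
lemma zip_mem_decomp {l : List α} {a b : α} (h : (a, b) ∈ l.zip l.tail) :
    ∃ s t, l = s ++ a :: b :: t := by
  induction l with
  | nil => simp at h
  | cons c l ih =>
    cases l with
    | nil => simp at h
    | cons d l' =>
      simp only [tail_cons, zip_cons_cons, mem_cons] at h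
      rcases h with h | h
      · obtain ⟨rfl, rfl⟩ := Prod.mk.injEq .. ▸ h
        exact ⟨[], l', by simp⟩
      · obtain ⟨s, t, hst⟩ := ih (by
          cases l' with
          | nil => simp at h
          | cons e l'' => simpa using h)
        exact ⟨c :: s, t, by simp [hst]⟩

lemma decomp_zip_mem (a b : α) (P Q : List α) :
    (a, b) ∈ (P ++ a :: b :: Q).zip (P ++ a :: b :: Q).tail := by
  induction P with
  | nil => simp
  | cons c P ih =>
    cases hP : P ++ a :: b :: Q with
    | nil => simp at hP
    | cons d M =>
      simp only [cons_append, hP, tail_cons, zip_cons_cons, mem_cons]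
      right
      rw [← hP]; rw [hP]
      have := ih
      rw [hP] at this
      simpa using this

lemma exists_succ {l : List α} {a : α} (h : a ∈ l) (hne : l.getLast? ≠ some a) :
    ∃ b, (a, b) ∈ l.zip l.tail := by
  induction l with
  | nil => simp at h
  | cons c l ih =>
    cases l with
    | nil =>
      simp at h hne
      exact absurd h.symm hne
    | cons d l' =>
      rcases mem_cons.1 h with rfl | h'
      · exact ⟨d, by simp⟩
      · have hne' : (d :: l').getLast? ≠ some a := by
          rwa [getLast?_cons_cons] at hne
        obtain ⟨b, hb⟩ := ih h' hne'
        exact ⟨b, by simp only [tail_cons, zip_cons_cons, mem_cons]; right; simpa using hb⟩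

lemma exists_pred {l : List α} {b : α} (h : b ∈ l) (hne : l.head? ≠ some b) :
    ∃ a, (a, b) ∈ l.zip l.tail := by
  induction l with
  | nil => simp at h
  | cons c l ih =>
    cases l with
    | nil =>
      simp at h hne
      exact absurd h.symm hne
    | cons d l' =>
      have hbc : b ≠ c := by simp at hne; tauto
      rcases mem_cons.1 h with rfl | h'
      · exact absurd rfl hbc
      · rcases eq_or_ne b d with rfl | hbd
        · exact ⟨c, by simp⟩
        · obtain ⟨a, ha⟩ := ih h' (by simp [hbd.symm])
          exact ⟨a, by simp only [tail_cons, zip_cons_cons, mem_cons]; right; simpa using ha⟩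

lemma decomp_unique {l s₁ t₁ s₂ t₂ : List α} {a : α} (hnd : l.Nodup)
    (h₁ : l = s₁ ++ a :: t₁) (h₂ : l = s₂ ++ a :: t₂) : s₁ = s₂ ∧ t₁ = t₂ := by
  have h := h₁ ▸ h₂
  rcases append_eq_append_iff.1 h with ⟨c, hc1, hc2⟩ | ⟨c, hc1, hc2⟩
  · cases c with
    | nil =>
      simp only [append_nil] at hc1
      exact ⟨hc1.symm, by simpa using hc2⟩
    | cons d c' =>
      exfalso
      have hd : a = d := by simpa using congrArg head? hc2
      subst hd
      rw [h₂, hc1] at hnd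
      rcases nodup_append.1 hnd with ⟨-, -, hdisj⟩
      exact hdisj a (by simp) a (by simp) rfl
  · cases c with
    | nil =>
      simp only [append_nil] at hc1
      exact ⟨hc1, by simpa using hc2.symm⟩
    | cons d c' =>
      exfalso
      have hd : a = d := by simpa using congrArg head? hc2
      subst hd
      rw [h₁, hc1] at hnd
      rcases nodup_append.1 hnd with ⟨-, -, hdisj⟩
      exact hdisj a (by simp) a (by simp) rfl

lemma head?_append_cons (A : List α) (a : α) (s t : List α) :
    (A ++ a :: s).head? = (A ++ a :: t).head? := by
  cases A <;> simp

lemma getLast?_append_cons (S T : List α) (c : α) (R : List α) :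
    (S ++ (c :: R)).getLast? = (T ++ (c :: R)).getLast? := by
  rw [getLast?_append_of_ne_nil _ (cons_ne_nil c R),
    getLast?_append_of_ne_nil _ (cons_ne_nil c R)]


lemma chain'_sup_edge {G : SimpleGraph V} {x y : V} {m : List V}
    (hc : m.IsChain (G ⊔ SimpleGraph.edge x y).Adj) (hy : y ∉ m) :
    m.IsChain G.Adj := by
  induction m with
  | nil => exact isChain_nil
  | cons a m ih =>
    rcases isChain_cons.1 hc with ⟨hhd, hc'⟩
    refine isChain_cons.2 ⟨fun b hb => ?_, ih hc' (fun h => hy (mem_cons_of_mem _ h))⟩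
    have := hhd b hb
    rcases this with h | h
    · exact h
    · exfalso
      rw [SimpleGraph.edge_adj] at h
      rcases h.1 with ⟨rfl, rfl⟩ | ⟨rfl, rfl⟩
      · exact hy (mem_cons_of_mem _ (mem_of_mem_head? hb))
      · exact hy mem_cons_self

/-- Build a walk from a chain list. -/
def walkOfChain (G : SimpleGraph V) :
    (l : List V) → (h : l ≠ []) → l.IsChain G.Adj → G.Walk (l.head h) (l.getLast h)
  | [a], _, _ => SimpleGraph.Walk.nil
  | a :: b :: t, _, hc =>
    SimpleGraph.Walk.cons
      (by
        have := isChain_cons.1 hc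
        simpa using this.1 b rfl)
      ((walkOfChain G (b :: t) (cons_ne_nil _ _) (isChain_cons.1 hc).2).copy rfl
        (by rw [getLast_cons (cons_ne_nil _ _)]))

lemma walkOfChain_support (G : SimpleGraph V) (l : List V) (h : l ≠ []) (hc : l.IsChain G.Adj) :
    (walkOfChain G l h hc).support = l := by
  induction l with
  | nil => simp at h
  | cons a t ih =>
    cases t with
    | nil => simp [walkOfChain]
    | cons b t' =>
      simp only [walkOfChain, SimpleGraph.Walk.support_cons, SimpleGraph.Walk.support_copy]
      rw [ih (cons_ne_nil _ _) (isChain_cons.1 hc).2]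
      simp


lemma flip_adj {V : Type*} (G : SimpleGraph V) : flip G.Adj = G.Adj := by
  ext a b; exact G.adj_comm b a

lemma edge_comm' {V : Type*} [DecidableEq V] (x y : V) :
    SimpleGraph.edge x y = SimpleGraph.edge y x := by
  ext a b; rw [SimpleGraph.edge_adj, SimpleGraph.edge_adj]; tauto

lemma find_bad {R S : α → α → Prop} :
    ∀ l : List α, l.IsChain S → ¬ l.IsChain R →
      ∃ P a b Q, l = P ++ a :: b :: Q ∧ S a b ∧ ¬ R a b
  | [], _, hR => absurd isChain_nil hR
  | [a], _, hR => absurd (isChain_singleton a) hR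
  | a :: b :: t, hS, hR => by
    rcases isChain_cons.1 hS with ⟨hS1, hS2⟩
    by_cases hr : R a b
    · have hR' : ¬ (b :: t).IsChain R := by
        intro hc
        exact hR (isChain_cons.2 ⟨by simpa using hr, hc⟩)
      obtain ⟨P, c, d, Q, hdec, hs, hnr⟩ := find_bad (b :: t) hS2 hR'
      exact ⟨a :: P, c, d, Q, by simp [hdec], hs, hnr⟩
    · exact ⟨[], a, b, t, rfl, by simpa using hS1, hr⟩

lemma exchangeCore {n : ℕ} (G : SimpleGraph (Fin n)) [DecidableRel G.Adj]
    (x y : Fin n) (hnadj : ¬G.Adj x y)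
    (hdeg : n + 1 ≤ G.degree x + G.degree y)
    (P Q : List (Fin n))
    (hchain : (P ++ x :: y :: Q).IsChain (G ⊔ SimpleGraph.edge x y).Adj)
    (hnd : (P ++ x :: y :: Q).Nodup) (hall : ∀ z, z ∈ P ++ x :: y :: Q) :
    ∃ l' : List (Fin n), l'.IsChain G.Adj ∧ l'.Nodup ∧ (∀ z, z ∈ l') ∧
      l'.head? = (P ++ x :: y :: Q).head? ∧
      l'.getLast? = (P ++ x :: y :: Q).getLast? := by
  classical
  set l := P ++ x :: y :: Q with hl
  have hxy : x ≠ y := by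
    intro h
    rw [hl, h] at hnd
    rcases nodup_append.1 hnd with ⟨-, hy, -⟩
    simp at hy
  have h1 : l = (P ++ [x]) ++ (y :: Q) := by simp [hl]
  have hndPQ := nodup_append.1 (h1 ▸ hnd)
  have hyP : y ∉ P ++ [x] := fun hy => hndPQ.2.2 y hy y mem_cons_self rfl
  have hxQ : x ∉ y :: Q := fun hx => hndPQ.2.2 x (by simp) x hx rfl
  have hPx : (P ++ [x]).IsChain G.Adj :=
    chain'_sup_edge (hchain.infix ⟨[], y :: Q, by simp [hl]⟩) hyP
  have hyQ : (y :: Q).IsChain G.Adj := by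
    have h2 := hchain.infix (⟨P ++ [x], [], by simp [hl]⟩ : (y :: Q) <:+: l)
    rw [edge_comm'] at h2
    exact chain'_sup_edge h2 hxQ
  have hln : l.length = n := by
    have hset : l.toFinset = Finset.univ :=
      Finset.eq_univ_iff_forall.2 (fun z => mem_toFinset.2 (hall z))
    have hcard := toFinset_card_of_nodup hnd
    rw [hset] at hcard
    simpa using hcard.symm
  have hn2 : 2 ≤ n := by
    have : Nontrivial (Fin n) := ⟨⟨x, y, hxy⟩⟩
    have := Fintype.one_lt_card_iff_nontrivial.2 this
    simp at this; omega
  set T := (l.zip l.tail).toFinset with hT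
  set T₁ := T.filter (fun p => G.Adj x p.1) with hT1def
  set T₂ := T.filter (fun p => G.Adj y p.2) with hT2def
  have hxyT : (x, y) ∈ T := by
    rw [hT]
    exact mem_toFinset.2 (by rw [hl]; exact decomp_zip_mem x y P Q)
  have hTcard : T.card ≤ n - 1 := by
    calc T.card ≤ (l.zip l.tail).length := toFinset_card_le _
    _ = min l.length l.tail.length := length_zip
    _ ≤ n - 1 := by rw [length_tail, hln]; omega
  have hlne : l ≠ [] := by
    intro h
    have := hall x
    rw [h] at this
    simp at this
  have hT1 : G.degree x ≤ T₁.card + 1 := by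
    have hsub : (G.neighborFinset x).erase (l.getLast hlne) ⊆ T₁.image Prod.fst := by
      intro a ha
      rcases Finset.mem_erase.1 ha with ⟨haw, haN⟩
      have hadj : G.Adj x a := by rwa [SimpleGraph.mem_neighborFinset] at haN
      have hane : l.getLast? ≠ some a := by
        rw [getLast?_eq_getLast hlne]
        intro h
        exact haw (Option.some_injective _ h).symm
      obtain ⟨b, hb⟩ := exists_succ (hall a) hane
      exact Finset.mem_image.2 ⟨(a, b),
        Finset.mem_filter.2 ⟨mem_toFinset.2 hb, hadj⟩, rfl⟩
    have h1' := Finset.pred_card_le_card_erase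
      (s := G.neighborFinset x) (a := l.getLast hlne)
    have h2' := Finset.card_le_card hsub
    have h3' := Finset.card_image_le (s := T₁) (f := Prod.fst)
    have hdx : G.degree x = (G.neighborFinset x).card := rfl
    omega
  have hT2 : G.degree y ≤ T₂.card + 1 := by
    have hsub : (G.neighborFinset y).erase (l.head hlne) ⊆ T₂.image Prod.snd := by
      intro b hb
      rcases Finset.mem_erase.1 hb with ⟨hbw, hbN⟩
      have hadj : G.Adj y b := by rwa [SimpleGraph.mem_neighborFinset] at hbN
      have hbne : l.head? ≠ some b := by
        rw [head?_eq_head hlne]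
        intro h
        exact hbw (Option.some_injective _ h).symm
      obtain ⟨a, ha⟩ := exists_pred (hall b) hbne
      exact Finset.mem_image.2 ⟨(a, b),
        Finset.mem_filter.2 ⟨mem_toFinset.2 ha, hadj⟩, rfl⟩
    have h1' := Finset.pred_card_le_card_erase
      (s := G.neighborFinset y) (a := l.head hlne)
    have h2' := Finset.card_le_card hsub
    have h3' := Finset.card_image_le (s := T₂) (f := Prod.snd)
    have hdy : G.degree y = (G.neighborFinset y).card := rfl
    omega
  have hsubU : T₁ ∪ T₂ ⊆ T.erase (x, y) := by
    intro p hp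
    refine Finset.mem_erase.2 ⟨?_, ?_⟩
    · intro h
      subst h
      rcases Finset.mem_union.1 hp with h | h
      · exact G.irrefl (Finset.mem_filter.1 h).2
      · exact G.irrefl (Finset.mem_filter.1 h).2
    · rcases Finset.mem_union.1 hp with h | h
      · exact (Finset.mem_filter.1 h).1
      · exact (Finset.mem_filter.1 h).1
  have hU : (T₁ ∪ T₂).card ≤ n - 2 := by
    refine le_trans (Finset.card_le_card hsubU) ?_
    rw [Finset.card_erase_of_mem hxyT]
    omega
  have hInter : 0 < (T₁ ∩ T₂).card := by
    have := Finset.card_union_add_card_inter T₁ T₂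
    omega
  obtain ⟨⟨a, b⟩, hp⟩ := Finset.card_pos.1 hInter
  have hxa : G.Adj x a := (Finset.mem_filter.1 (Finset.mem_inter.1 hp).1).2
  have hyb : G.Adj y b := (Finset.mem_filter.1 (Finset.mem_inter.1 hp).2).2
  have hzip : (a, b) ∈ l.zip l.tail :=
    mem_toFinset.1 (Finset.mem_filter.1 (Finset.mem_inter.1 hp).1).1
  obtain ⟨l₁, l₂, hldec⟩ := zip_mem_decomp hzip
  have hax : a ≠ x := (G.ne_of_adj hxa).symm
  have hay : a ≠ y := fun h => hnadj (h ▸ hxa)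
  have haPQ : a ∈ P ∨ a ∈ Q := by
    have := hall a
    rw [hl] at this
    simp only [mem_append, mem_cons] at this
    tauto
  rcases haPQ with hP | hQ
  · -- a lies in P
    obtain ⟨P₁, P₂, hPdec⟩ := append_of_mem hP
    have hldec2 : l = P₁ ++ a :: (P₂ ++ x :: y :: Q) := by simp [hl, hPdec]
    obtain ⟨hl₁, htail⟩ := decomp_unique hnd hldec hldec2
    cases P₂ with
    | nil =>
      exfalso
      have hbx : b = x := by simpa using congrArg head? htail
      subst hbx
      exact hnadj (G.adj_symm hyb)
    | cons c P₂' =>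
      have hbc : b = c := by simpa using congrArg head? htail
      subst hbc
      have hleq : l = (P₁ ++ [a]) ++ ((b :: P₂') ++ (x :: y :: Q)) := by
        simp [hl, hPdec]
      have hperm : ((P₁ ++ [a]) ++ ((x :: (b :: P₂').reverse) ++ (y :: Q))).Perm l := by
        rw [hleq]
        refine Perm.append_left _ ?_
        have s1 : ((b :: P₂').reverse ++ (y :: Q)).Perm ((b :: P₂') ++ (y :: Q)) :=
          (reverse_perm _).append_right _
        exact (s1.cons x).trans perm_middle.symm
      have hhead : ((P₁ ++ [a]) ++ ((x :: (b :: P₂').reverse) ++ (y :: Q))).head?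
          = l.head? := by
        have e0 : (P₁ ++ [a]) ++ ((x :: (b :: P₂').reverse) ++ (y :: Q))
            = P₁ ++ a :: ((x :: (b :: P₂').reverse) ++ (y :: Q)) := by simp
        rw [e0, hldec2]
        exact head?_append_cons _ _ _ _
      have hlast : ((P₁ ++ [a]) ++ ((x :: (b :: P₂').reverse) ++ (y :: Q))).getLast?
          = l.getLast? := by
        have e1 : (P₁ ++ [a]) ++ ((x :: (b :: P₂').reverse) ++ (y :: Q))
            = ((P₁ ++ [a]) ++ (x :: (b :: P₂').reverse)) ++ (y :: Q) := by simp
        rw [e1, h1]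
        exact getLast?_append_cons _ _ _ _
      have cA : (P₁ ++ [a]).IsChain G.Adj :=
        hPx.infix ⟨[], (b :: P₂') ++ [x], by simp [hPdec]⟩
      have cMid : ((b :: P₂') ++ [x]).IsChain G.Adj :=
        hPx.infix ⟨P₁ ++ [a], [], by simp [hPdec]⟩
      have cB : (x :: (b :: P₂').reverse).IsChain G.Adj := by
        rw [show x :: (b :: P₂').reverse = ((b :: P₂') ++ [x]).reverse by simp,
          isChain_reverse]
        exact cMid.imp fun _ _ h => G.adj_symm h
      have hlastB : (x :: (b :: P₂').reverse).getLast? = some b := by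
        rw [show x :: (b :: P₂').reverse = ((b :: P₂') ++ [x]).reverse by simp,
          getLast?_reverse]
        simp
      have cBC : ((x :: (b :: P₂').reverse) ++ (y :: Q)).IsChain G.Adj := by
        refine isChain_append.2 ⟨cB, hyQ, ?_⟩
        intro p hp' q hq'
        rw [hlastB] at hp'
        simp only [head?_cons, Option.mem_def, Option.some_inj] at hp' hq'
        subst hp'; subst hq'
        exact G.adj_symm hyb
      have cAll : ((P₁ ++ [a]) ++ ((x :: (b :: P₂').reverse) ++ (y :: Q))).IsChain G.Adj := by
        refine isChain_append.2 ⟨cA, cBC, ?_⟩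
        intro p hp' q hq'
        rw [getLast?_append_of_ne_nil _ (by simp : [a] ≠ ([] : List (Fin n)))] at hp'
        simp only [getLast?_singleton, Option.mem_def, Option.some_inj] at hp'
        have hq'' : q = x := by
          rw [show (x :: (b :: P₂').reverse) ++ (y :: Q)
              = x :: ((b :: P₂').reverse ++ (y :: Q)) from rfl] at hq'
          simp only [head?_cons, Option.mem_def, Option.some_inj] at hq'
          exact hq'.symm
        subst hp'; subst hq''
        exact G.adj_symm hxa
      exact ⟨_, cAll, hperm.nodup_iff.2 hnd, fun z => hperm.mem_iff.2 (hall z),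
        hhead, hlast⟩
  · -- a lies in Q
    obtain ⟨Q₁, Q₂, hQdec⟩ := append_of_mem hQ
    have hldec2 : l = (P ++ x :: y :: Q₁) ++ a :: Q₂ := by simp [hl, hQdec]
    obtain ⟨hl₁, htail⟩ := decomp_unique hnd hldec hldec2
    have hQ₂ : Q₂ = b :: l₂ := htail.symm
    have hyQfull : (y :: (Q₁ ++ a :: (b :: l₂))).IsChain G.Adj := by
      rw [← hQ₂, ← hQdec]; exact hyQ
    have cMid : (Q₁ ++ [a]).IsChain G.Adj :=
      hyQ.infix ⟨[y], Q₂, by simp [hQdec]⟩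
    have cArev : (a :: Q₁.reverse).IsChain G.Adj := by
      rw [show a :: Q₁.reverse = (Q₁ ++ [a]).reverse by simp, isChain_reverse]
      exact cMid.imp fun _ _ h => G.adj_symm h
    have cTail : (b :: l₂).IsChain G.Adj :=
      hyQ.infix ⟨y :: Q₁ ++ [a], [], by simp [hQdec, hQ₂]⟩
    have cC : (y :: b :: l₂).IsChain G.Adj := isChain_cons_cons.2 ⟨hyb, cTail⟩
    have hleq : l = (P ++ [x]) ++ (y :: (Q₁ ++ a :: (b :: l₂))) := by
      simp [hl, hQdec, hQ₂]
    have hperm : ((P ++ [x]) ++ ((a :: Q₁.reverse) ++ (y :: b :: l₂))).Perm l := by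
      rw [hleq]
      refine Perm.append_left _ ?_
      have s1 : (a :: (Q₁.reverse ++ (y :: (b :: l₂)))).Perm
          (a :: y :: (Q₁.reverse ++ (b :: l₂))) := (perm_middle).cons a
      have s2 : (a :: y :: (Q₁.reverse ++ (b :: l₂))).Perm
          (a :: y :: (Q₁ ++ (b :: l₂))) :=
        (((reverse_perm Q₁).append_right _).cons y).cons a
      have s3 : (y :: (Q₁ ++ a :: (b :: l₂))).Perm
          (y :: a :: (Q₁ ++ (b :: l₂))) := (perm_middle).cons y
      have s4 : (y :: a :: (Q₁ ++ (b :: l₂))).Perm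
          (a :: y :: (Q₁ ++ (b :: l₂))) := Perm.swap a y _
      exact (s1.trans s2).trans ((s3.trans s4).symm)
    have hhead : ((P ++ [x]) ++ ((a :: Q₁.reverse) ++ (y :: b :: l₂))).head?
        = l.head? := by
      have e0 : (P ++ [x]) ++ ((a :: Q₁.reverse) ++ (y :: b :: l₂))
          = P ++ x :: ((a :: Q₁.reverse) ++ (y :: b :: l₂)) := by simp
      rw [e0, hl]
      exact head?_append_cons _ _ _ _
    have hlast : ((P ++ [x]) ++ ((a :: Q₁.reverse) ++ (y :: b :: l₂))).getLast?
        = l.getLast? := by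
      have e1 : (P ++ [x]) ++ ((a :: Q₁.reverse) ++ (y :: b :: l₂))
          = (((P ++ [x]) ++ (a :: Q₁.reverse)) ++ [y]) ++ (b :: l₂) := by simp
      have e2 : l = (l₁ ++ [a]) ++ (b :: l₂) := by rw [hldec]; simp
      rw [e1, e2]
      exact getLast?_append_cons _ _ _ _
    have hlastA : (a :: Q₁.reverse).getLast? = (Q₁ ++ [a]).head? := by
      rw [show a :: Q₁.reverse = (Q₁ ++ [a]).reverse by simp, getLast?_reverse]
    have hheadadj : ∀ p ∈ (Q₁ ++ [a]).head?, G.Adj y p := by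
      intro p hp'
      have hh := (isChain_cons.1 hyQfull).1
      apply hh
      rw [show Q₁ ++ a :: (b :: l₂) = (Q₁ ++ [a]) ++ (b :: l₂) by simp]
      rcases Q₁ with _ | ⟨d, Q₁'⟩ <;> simpa using hp'
    have cBC : ((a :: Q₁.reverse) ++ (y :: b :: l₂)).IsChain G.Adj := by
      refine isChain_append.2 ⟨cArev, cC, ?_⟩
      intro p hp' q hq'
      rw [hlastA] at hp'
      simp only [head?_cons, Option.mem_def, Option.some_inj] at hq'
      subst hq'
      exact G.adj_symm (hheadadj p hp')
    have cAll : ((P ++ [x]) ++ ((a :: Q₁.reverse) ++ (y :: b :: l₂))).IsChain G.Adj := by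
      refine isChain_append.2 ⟨hPx, cBC, ?_⟩
      intro p hp' q hq'
      rw [getLast?_append_of_ne_nil _ (by simp : [x] ≠ ([] : List (Fin n)))] at hp'
      simp only [getLast?_singleton, Option.mem_def, Option.some_inj] at hp'
      have hq'' : q = a := by
        rw [show (a :: Q₁.reverse) ++ (y :: b :: l₂)
            = a :: (Q₁.reverse ++ (y :: b :: l₂)) from rfl] at hq'
        simp only [head?_cons, Option.mem_def, Option.some_inj] at hq'
        exact hq'.symm
      subst hp'; subst hq''
      exact hxa
    exact ⟨_, cAll, hperm.nodup_iff.2 hnd, fun z => hperm.mem_iff.2 (hall z),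
      hhead, hlast⟩

lemma exchange {n : ℕ} (G : SimpleGraph (Fin n)) [DecidableRel G.Adj]
    (x y : Fin n) (hnadj : ¬G.Adj x y)
    (hdeg : n + 1 ≤ G.degree x + G.degree y)
    (l : List (Fin n)) (hchain : l.IsChain (G ⊔ SimpleGraph.edge x y).Adj)
    (hnd : l.Nodup) (hall : ∀ z, z ∈ l) :
    ∃ l' : List (Fin n), l'.IsChain G.Adj ∧ l'.Nodup ∧ (∀ z, z ∈ l') ∧
      l'.head? = l.head? ∧ l'.getLast? = l.getLast? := by
  by_cases hc : l.IsChain G.Adj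
  · exact ⟨l, hc, hnd, hall, rfl, rfl⟩
  obtain ⟨P, a, b, Q, hdec, hS, hnR⟩ := find_bad l hchain hc
  have hab : (a = x ∧ b = y) ∨ (a = y ∧ b = x) := by
    rcases hS with h | h
    · exact absurd h hnR
    · rw [SimpleGraph.edge_adj] at h; tauto
  subst hdec
  rcases hab with ⟨rfl, rfl⟩ | ⟨rfl, rfl⟩
  · exact exchangeCore G a b hnadj hdeg P Q hchain hnd hall
  · have hnadj' : ¬G.Adj a b := fun hh => hnadj (G.adj_symm hh)
    have hdeg' : n + 1 ≤ G.degree a + G.degree b := by omega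
    have hchain' : (P ++ a :: b :: Q).IsChain (G ⊔ SimpleGraph.edge a b).Adj := by
      rwa [edge_comm' a b]
    exact exchangeCore G a b hnadj' hdeg' P Q hchain' hnd hall

lemma ncard_neighborSet_eq_degree {V : Type*} [Fintype V] (G : SimpleGraph V)
    [DecidableRel G.Adj] (v : V) : (G.neighborSet v).ncard = G.degree v := by
  rw [← SimpleGraph.card_neighborSet_eq_degree, ← Nat.card_coe_set_eq,
    Nat.card_eq_fintype_card]

lemma complete_case {n : ℕ} (G : SimpleGraph (Fin n))
    (hcomp : ∀ a b : Fin n, a ≠ b → G.Adj a b) (u v : Fin n) (huv : u ≠ v) :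
    ∃ l : List (Fin n), l.IsChain G.Adj ∧ l.Nodup ∧ (∀ z, z ∈ l) ∧
      l.head? = some u ∧ l.getLast? = some v := by
  classical
  set M := ((Finset.univ : Finset (Fin n)).erase u).erase v with hM
  have h1 : u ∉ M.toList := by simp [hM, huv]
  have h2 : v ∉ M.toList := by simp [hM]
  have h3 : M.toList.Nodup := Finset.nodup_toList M
  have hnd : ((u :: M.toList) ++ [v]).Nodup := by
    rw [List.nodup_append]
    refine ⟨List.nodup_cons.2 ⟨h1, h3⟩, List.nodup_singleton v, ?_⟩
    intro z hz w hw hzv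
    simp only [List.mem_singleton] at hw
    subst hw; subst hzv
    rcases List.mem_cons.1 hz with hh | hh
    · exact huv hh.symm
    · exact h2 hh
  refine ⟨(u :: M.toList) ++ [v], ?_, hnd, ?_, ?_, ?_⟩
  · exact List.IsChain.imp (fun a b hab => hcomp a b hab) (List.Pairwise.isChain hnd)
  · intro z
    rcases eq_or_ne z u with rfl | hzu
    · simp
    rcases eq_or_ne z v with rfl | hzv
    · simp
    · simp [hM, Finset.mem_toList, hzu, hzv]
  · simp
  · rw [getLast?_append_of_ne_nil _ (by simp : [v] ≠ ([] : List (Fin n)))]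
    simp

lemma aux {n : ℕ} (m : ℕ) : ∀ (G : SimpleGraph (Fin n)),
    Gᶜ.edgeSet.ncard ≤ m →
    (∀ u v : Fin n, u ≠ v → ¬G.Adj u v →
      n + 1 ≤ (G.neighborSet u).ncard + (G.neighborSet v).ncard) →
    ∀ u v : Fin n, u ≠ v → ∃ l : List (Fin n), l.IsChain G.Adj ∧ l.Nodup ∧
      (∀ z, z ∈ l) ∧ l.head? = some u ∧ l.getLast? = some v := by
  induction m with
  | zero =>
    intro G hm h u v huv
    refine complete_case G ?_ u v huv
    intro a b hab
    by_contra hnadj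
    have hmem : s(a, b) ∈ Gᶜ.edgeSet := by
      rw [SimpleGraph.mem_edgeSet, SimpleGraph.compl_adj]
      exact ⟨hab, hnadj⟩
    have hfin : Gᶜ.edgeSet.Finite := Set.toFinite _
    have := (Set.ncard_pos hfin).2 ⟨_, hmem⟩
    omega
  | succ m ih =>
    intro G hm h u v huv
    classical
    by_cases hcomp : ∀ a b : Fin n, a ≠ b → G.Adj a b
    · exact complete_case G hcomp u v huv
    push_neg at hcomp
    obtain ⟨x, y, hxy, hnadj⟩ := hcomp
    have hle : G ≤ G ⊔ SimpleGraph.edge x y := le_sup_left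
    have hsubE : (G ⊔ SimpleGraph.edge x y)ᶜ.edgeSet ⊆ Gᶜ.edgeSet \ {s(x, y)} := by
      intro e
      induction e using Sym2.ind with
      | _ a b =>
        intro he
        rw [SimpleGraph.mem_edgeSet, SimpleGraph.compl_adj] at he
        have hG2xy : (G ⊔ SimpleGraph.edge x y).Adj x y :=
          (SimpleGraph.sup_adj _ _ _ _).2 (Or.inr (by rw [SimpleGraph.edge_adj]; tauto))
        constructor
        · rw [SimpleGraph.mem_edgeSet, SimpleGraph.compl_adj]
          exact ⟨he.1, fun hadj => he.2 (hle hadj)⟩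
        · intro hmem
          rw [Set.mem_singleton_iff, Sym2.eq_iff] at hmem
          rcases hmem with ⟨rfl, rfl⟩ | ⟨rfl, rfl⟩
          · exact he.2 hG2xy
          · exact he.2 hG2xy.symm
    have hcard2 : (G ⊔ SimpleGraph.edge x y)ᶜ.edgeSet.ncard ≤ m := by
      have hxyE : s(x, y) ∈ Gᶜ.edgeSet := by
        rw [SimpleGraph.mem_edgeSet, SimpleGraph.compl_adj]
        exact ⟨hxy, hnadj⟩
      have hfin : Gᶜ.edgeSet.Finite := Set.toFinite _
      have hle1 := Set.ncard_le_ncard hsubE hfin.diff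
      have hdiff : (Gᶜ.edgeSet \ {s(x, y)}).ncard = Gᶜ.edgeSet.ncard - 1 :=
        Set.ncard_diff_singleton_of_mem hxyE
      have hpos := (Set.ncard_pos hfin).2 ⟨_, hxyE⟩
      omega
    have h₂ : ∀ a b : Fin n, a ≠ b → ¬(G ⊔ SimpleGraph.edge x y).Adj a b →
        n + 1 ≤ ((G ⊔ SimpleGraph.edge x y).neighborSet a).ncard +
          ((G ⊔ SimpleGraph.edge x y).neighborSet b).ncard := by
      intro a b hab hnadj2
      have hn : ¬G.Adj a b := fun hh => hnadj2 (hle hh)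
      have hmono : ∀ c : Fin n, (G.neighborSet c).ncard ≤
          ((G ⊔ SimpleGraph.edge x y).neighborSet c).ncard := fun c =>
        Set.ncard_le_ncard (fun w hw => hle hw) (Set.toFinite _)
      have hh := h a b hab hn
      have ha' := hmono a
      have hb' := hmono b
      omega
    obtain ⟨l, hc2, hnd, hall, hhd, hlst⟩ := ih (G ⊔ SimpleGraph.edge x y) hcard2 h₂ u v huv
    letI : DecidableRel G.Adj := Classical.decRel _
    have hdeg : n + 1 ≤ G.degree x + G.degree y := by
      have hh := h x y hxy hnadj
      rwa [ncard_neighborSet_eq_degree, ncard_neighborSet_eq_degree] at hh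
    obtain ⟨l', hc', hnd', hall', hh', hlst'⟩ :=
      exchange G x y hnadj hdeg l hc2 hnd hall
    exact ⟨l', hc', hnd', hall', hh'.trans hhd, hlst'.trans hlst⟩

end EGHelp

/-- Erdős–Gallai: if d(u)+d(v) ≥ n+1 for every pair of nonadjacent vertices,
G is Hamilton-connected. -/
theorem erdos_gallai_hamilton_connected (n : ℕ) (G : SimpleGraph (Fin n))
    [DecidableRel G.Adj]
    (h : ∀ u v : Fin n, u ≠ v → ¬ G.Adj u v → n + 1 ≤ G.degree u + G.degree v) :
    ∀ u v : Fin n, u ≠ v → ∃ p : G.Walk u v, p.IsHamiltonian := by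
  intro u v huv
  have h' : ∀ a b : Fin n, a ≠ b → ¬G.Adj a b →
      n + 1 ≤ (G.neighborSet a).ncard + (G.neighborSet b).ncard := by
    intro a b hab hnadj
    rw [EGHelp.ncard_neighborSet_eq_degree, EGHelp.ncard_neighborSet_eq_degree]
    exact h a b hab hnadj
  obtain ⟨l, hc, hnd, hall, hhd, hlst⟩ :=
    EGHelp.aux (Gᶜ.edgeSet.ncard) G le_rfl h' u v huv
  have hne : l ≠ [] := by
    intro hh
    rw [hh] at hhd
    simp at hhd
  have hu : l.head hne = u := by
    rw [List.head?_eq_head hne] at hhd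
    exact Option.some_injective _ hhd
  have hv : l.getLast hne = v := by
    rw [List.getLast?_eq_getLast hne] at hlst
    exact Option.some_injective _ hlst
  refine ⟨(EGHelp.walkOfChain G l hne hc).copy hu hv, ?_⟩
  have hsupp : ((EGHelp.walkOfChain G l hne hc).copy hu hv).support = l := by
    rw [SimpleGraph.Walk.support_copy, EGHelp.walkOfChain_support]
  have hpath : ((EGHelp.walkOfChain G l hne hc).copy hu hv).IsPath :=
    SimpleGraph.Walk.IsPath.mk' (by rw [hsupp]; exact hnd)
  exact hpath.isHamiltonian_of_mem (fun w => by rw [hsupp]; exact hall w)
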